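/- Let R be a unital ring and A a 3×3 matrix over R whose trace is a commutator. For k = 1, 2, 3 let s_k, t_k, u_k be central elements of R with Σ_k (s_k + t_k + u_k) = 0, and set p_k(X) = (X - s_k)(X - t_k)(X - u_k). Then A = A₁ + A₂ + A₃ with p_k(A_k) = 0 for each k. -/
import Mathlib

section Aux
variable {R : Type*} [Ring R]

private lemma tri_upper' (a b c p q r : R) :
    (!![a,p,q;0,b,r;0,0,c] - a • (1 : Matrix (Fin 3) (Fin 3) R)) *
    (!![a,p,q;0,b,r;0,0,c] - b • (1 : Matrix (Fin 3) (Fin 3) R)) *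
    (!![a,p,q;0,b,r;0,0,c] - c • (1 : Matrix (Fin 3) (Fin 3) R)) = 0 := by
  ext i j
  fin_cases i <;> fin_cases j <;>
    simp [Matrix.mul_apply, Matrix.one_apply, Fin.sum_univ_three, Matrix.vecHead,
      Matrix.vecTail, -Matrix.cons_mul, -Matrix.vecMul_cons, -Matrix.cons_vecMul]

private lemma tri_lower' (a b c p q r : R) :
    (!![c,0,0;p,b,0;q,r,a] - a • (1 : Matrix (Fin 3) (Fin 3) R)) *
    (!![c,0,0;p,b,0;q,r,a] - b • (1 : Matrix (Fin 3) (Fin 3) R)) *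
    (!![c,0,0;p,b,0;q,r,a] - c • (1 : Matrix (Fin 3) (Fin 3) R)) = 0 := by
  ext i j
  fin_cases i <;> fin_cases j <;>
    simp [Matrix.mul_apply, Matrix.one_apply, Fin.sum_univ_three, Matrix.vecHead,
      Matrix.vecTail, -Matrix.cons_mul, -Matrix.vecMul_cons, -Matrix.cons_vecMul]

private lemma keyD (s2 t2 u2 x y d1 d2 : R)
    (hs2 : ∀ g : R, g * s2 = s2 * g) (ht2 : ∀ g : R, g * t2 = t2 * g)
    (hu2 : ∀ g : R, g * u2 = u2 * g) :
    ∃ D : Matrix (Fin 3) (Fin 3) R,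
      D 0 0 = s2 + d1 ∧ D 1 1 = t2 + d2 ∧ D 2 2 = u2 + (x*y - y*x) - d1 - d2 ∧
      (D - s2 • (1 : Matrix (Fin 3) (Fin 3) R)) *
      (D - t2 • (1 : Matrix (Fin 3) (Fin 3) R)) *
      (D - u2 • (1 : Matrix (Fin 3) (Fin 3) R)) = 0 := by
  set T : Matrix (Fin 3) (Fin 3) R :=
    !![s2, 1, y; 0, t2, 1 - (-d1 - y*x)*y; 0, 0, u2] with hT
  set Pm : Matrix (Fin 3) (Fin 3) R :=
    !![1,0,0; -d1 - y*x, 1, 0;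
       x + (-d1 - d2 - y*x)*(-d1 - y*x), -d1 - d2 - y*x, 1] with hPm
  set Qm : Matrix (Fin 3) (Fin 3) R :=
    !![1,0,0; d1 + y*x, 1, 0; -x, d1 + d2 + y*x, 1] with hQm
  have hPQ : Pm * Qm = 1 := by
    rw [hPm, hQm]
    ext i j
    fin_cases i <;> fin_cases j <;>
      simp [Matrix.mul_apply, Matrix.one_apply, Fin.sum_univ_three, Matrix.vecHead,
        Matrix.vecTail, -Matrix.cons_mul, -Matrix.vecMul_cons, -Matrix.cons_vecMul] <;>
      noncomm_ring
  have hQP : Qm * Pm = 1 := by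
    rw [hPm, hQm]
    ext i j
    fin_cases i <;> fin_cases j <;>
      simp [Matrix.mul_apply, Matrix.one_apply, Fin.sum_univ_three, Matrix.vecHead,
        Matrix.vecTail, -Matrix.cons_mul, -Matrix.vecMul_cons, -Matrix.cons_vecMul] <;>
      noncomm_ring
  refine ⟨Pm * T * Qm, ?_, ?_, ?_, ?_⟩
  · rw [hPm, hQm, hT]
    simp [Matrix.mul_apply, Fin.sum_univ_three, Matrix.vecHead, Matrix.vecTail,
      -Matrix.cons_mul, -Matrix.vecMul_cons, -Matrix.cons_vecMul]
    first
    | noncomm_ring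
    | abel
  · rw [hPm, hQm, hT]
    simp [Matrix.mul_apply, Fin.sum_univ_three, Matrix.vecHead, Matrix.vecTail,
      -Matrix.cons_mul, -Matrix.vecMul_cons, -Matrix.cons_vecMul]
    first
    | noncomm_ring
    | abel
  · rw [hPm, hQm, hT]
    simp [Matrix.mul_apply, Fin.sum_univ_three, Matrix.vecHead, Matrix.vecTail,
      -Matrix.cons_mul, -Matrix.vecMul_cons, -Matrix.cons_vecMul]
    first
    | noncomm_ring
    | abel
  · -- conjugation argument
    have hconj : ∀ c : R, (∀ g : R, g * c = c * g) →
        Pm * T * Qm - c • (1 : Matrix (Fin 3) (Fin 3) R) = Pm * (T - c • 1) * Qm := by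
      intro c hc
      have h1 : Pm * (c • (1 : Matrix (Fin 3) (Fin 3) R)) * Qm = c • 1 := by
        have hcomm : (c • (1 : Matrix (Fin 3) (Fin 3) R)) * Pm
            = Pm * (c • (1 : Matrix (Fin 3) (Fin 3) R)) := by
          have := (Matrix.scalar_commute (n := Fin 3) c (fun r' => (hc r').symm) Pm).eq
          simpa [Matrix.smul_one_eq_diagonal] using this
        rw [← hcomm, Matrix.mul_assoc, hPQ, Matrix.mul_one]
      rw [Matrix.mul_sub, Matrix.sub_mul, h1]
    have hmul : ∀ X Y : Matrix (Fin 3) (Fin 3) R,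
        (Pm * X * Qm) * (Pm * Y * Qm) = Pm * (X * Y) * Qm := by
      intro X Y
      calc (Pm * X * Qm) * (Pm * Y * Qm) = Pm * X * (Qm * Pm) * (Y * Qm) := by
            noncomm_ring
        _ = Pm * (X * Y) * Qm := by rw [hQP]; noncomm_ring
    rw [hconj s2 hs2, hconj t2 ht2, hconj u2 hu2, hmul, hmul]
    rw [hT]
    rw [tri_upper' s2 t2 u2 1 y (1 - (-d1 - y*x)*y)]
    simp

end Aux

theorem stmt_7 (R : Type*) [Ring R] (A : Matrix (Fin 3) (Fin 3) R)
    (s t u : Fin 3 → R)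
    (hs : ∀ k, s k ∈ Subring.center R) (ht : ∀ k, t k ∈ Subring.center R)
    (hu : ∀ k, u k ∈ Subring.center R)
    (hsum : ∑ k : Fin 3, (s k + t k + u k) = 0)
    (h : ∃ x y : R, A 0 0 + A 1 1 + A 2 2 = x * y - y * x) :
    ∃ B : Fin 3 → Matrix (Fin 3) (Fin 3) R,
      A = B 0 + B 1 + B 2 ∧
      ∀ k : Fin 3,
        (B k - s k • (1 : Matrix (Fin 3) (Fin 3) R)) *
        (B k - t k • (1 : Matrix (Fin 3) (Fin 3) R)) *
        (B k - u k • (1 : Matrix (Fin 3) (Fin 3) R)) = 0 := by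
  obtain ⟨x, y, hxy⟩ := h
  obtain ⟨D, hD0, hD1, hD2, hDp⟩ := keyD (s 2) (t 2) (u 2) x y
    (A 0 0 - s 0 - u 1 - s 2) (A 1 1 - t 0 - t 1 - t 2)
    (Subring.mem_center_iff.mp (hs 2)) (Subring.mem_center_iff.mp (ht 2))
    (Subring.mem_center_iff.mp (hu 2))
  rw [Fin.sum_univ_three] at hsum
  have hD0' : D 0 0 = A 0 0 - s 0 - u 1 := by rw [hD0]; abel
  have hD1' : D 1 1 = A 1 1 - t 0 - t 1 := by rw [hD1]; abel
  have hD2' : D 2 2 = A 2 2 - u 0 - s 1 := by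
    rw [hD2, ← hxy]
    have h0 : (u 2 + (A 0 0 + A 1 1 + A 2 2) - (A 0 0 - s 0 - u 1 - s 2)
        - (A 1 1 - t 0 - t 1 - t 2)) - (A 2 2 - u 0 - s 1)
        = (s 0 + t 0 + u 0) + (s 1 + t 1 + u 1) + (s 2 + t 2 + u 2) := by abel
    rw [hsum] at h0
    exact sub_eq_zero.mp h0
  refine ⟨![!![s 0, A 0 1 - D 0 1, A 0 2 - D 0 2; 0, t 0, A 1 2 - D 1 2; 0, 0, u 0],
            !![u 1, 0, 0; A 1 0 - D 1 0, t 1, 0; A 2 0 - D 2 0, A 2 1 - D 2 1, s 1],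
            D], ?_, ?_⟩
  · ext i j
    fin_cases i <;> fin_cases j <;>
      simp [Matrix.add_apply, Matrix.vecHead, Matrix.vecTail, hD0', hD1', hD2'] <;>
      abel
  · intro k
    fin_cases k
    · simpa using tri_upper' (s 0) (t 0) (u 0) (A 0 1 - D 0 1) (A 0 2 - D 0 2) (A 1 2 - D 1 2)
    · simpa using tri_lower' (s 1) (t 1) (u 1) (A 1 0 - D 1 0) (A 2 0 - D 2 0) (A 2 1 - D 2 1)
    · simpa using hDp
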